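/- Let A be a unital C*-algebra, let ζ be a complex number with |ζ| = 1, let d = (d_1,…,d_n) ∈ ℤⁿ, let z ∈ A be unitary, and let u_{ij} ∈ A (1 ≤ i,j ≤ n) satisfy z u_{ij} = ζ^{d_i−d_j} u_{ij} z for all i,j. Set t_{ij} = z^{d_i} u_{ij}. Then: (a) u*_{ij} z^{−d_i} = ζ^{d_i(d_j−d_i)} z^{−d_i} u*_{ij} for all i,j; (b) the entrywise-adjoint matrix t̄ = (t*_{ij})_{ij} (no transpose) equals the matrix product diag(z^{−d_1},…,z^{−d_n}) · ū_ζ in M_n(A), where ū_ζ is the ζ-conjugate of u = (u_{ij}); and (c) if ū_ζ is invertible in M_n(A), then t̄ is invertible in M_n(A). (This is the computation showing that the bosonization of the braided free unitary quantum group is a compact matrix quantum group.) -/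

import Mathlib

/-- The ζ-conjugate matrix `ū_ζ`, defined entrywise by
`(ū_ζ) i j = ζ^(dᵢ(dⱼ−dᵢ)) • (u i j)*`. -/
noncomputable def zetaConj {n : ℕ} {B : Type*} [Ring B] [StarRing B] [Module ℂ B]
    (ζ : ℂ) (d : Fin n → ℤ) (q : Matrix (Fin n) (Fin n) B) : Matrix (Fin n) (Fin n) B :=
  Matrix.of fun i j => ζ ^ (d i * (d j - d i)) • star (q i j)

/-- for a unitary `z` with `z u_{ij} = ζ^(dᵢ−dⱼ) u_{ij} z` and
`t_{ij} = z^(dᵢ) u_{ij}`: (a) `u*_{ij} z^(−dᵢ) = ζ^(dᵢ(dⱼ−dᵢ)) • (z^(−dᵢ) u*_{ij})`;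
(b) the entrywise-adjoint matrix `t̄` equals `diag(z^(−d₁),…,z^(−dₙ)) · ū_ζ`;
(c) if `ū_ζ` is invertible in `Mₙ(A)`, so is `t̄`. -/
theorem stmt10 {n : ℕ} {A : Type*} [CStarAlgebra A]
    (ζ : ℂ) (hζ : ‖ζ‖ = 1) (d : Fin n → ℤ)
    (z : unitary A)
    (u : Matrix (Fin n) (Fin n) A)
    (hzu : ∀ i j, (z : A) * u i j = ζ ^ (d i - d j) • (u i j * (z : A)))
    (t : Matrix (Fin n) (Fin n) A)
    (ht : ∀ i j, t i j = ((z ^ d i : unitary A) : A) * u i j)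
    (tbar : Matrix (Fin n) (Fin n) A)
    (htbar : ∀ i j, tbar i j = star (t i j)) :
    (∀ i j, star (u i j) * ((z ^ (-d i) : unitary A) : A) =
        ζ ^ (d i * (d j - d i)) • (((z ^ (-d i) : unitary A) : A) * star (u i j))) ∧
    tbar = (Matrix.diagonal fun i => ((z ^ (-d i) : unitary A) : A)) * zetaConj ζ d u ∧
    (IsUnit (zetaConj ζ d u) → IsUnit tbar) := by
  have hζ0 : ζ ≠ 0 := by
    intro h; rw [h] at hζ; simp at hζ
  have hnsq : Complex.normSq ζ = 1 := by
    rw [Complex.normSq_eq_norm_sq, hζ]; norm_num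
  have hconj : (starRingEnd ℂ) ζ = ζ⁻¹ := by
    apply eq_inv_of_mul_eq_one_left
    rw [mul_comm, Complex.mul_conj, hnsq, Complex.ofReal_one]
  have hcoe_inv : ((z⁻¹ : unitary A) : A) = star (z : A) := by
    rw [← Unitary.star_eq_inv, Unitary.coe_star]
  have hstar : ∀ k : ℤ, star ((z ^ k : unitary A) : A) = ((z ^ (-k) : unitary A) : A) := by
    intro k
    rw [← Unitary.coe_star, Unitary.star_eq_inv, ← zpow_neg]
  -- the inverse relation
  have hzu' : ∀ i j, ((z⁻¹ : unitary A) : A) * u i j =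
      ζ ^ (-(d i - d j)) • (u i j * ((z⁻¹ : unitary A) : A)) := by
    intro i j
    have hx : u i j * (z : A) = ζ ^ (-(d i - d j)) • ((z : A) * u i j) := by
      rw [hzu i j, smul_smul, ← zpow_add₀ hζ0]
      simp
    have h1 : star (z : A) * (u i j * (z : A)) * star (z : A) = star (z : A) * u i j := by
      rw [mul_assoc, mul_assoc,
        show (z : A) * star (z : A) = 1 from Unitary.mul_star_self_of_mem z.prop, mul_one]
    rw [hcoe_inv, ← h1, hx]
    simp only [mul_smul_comm, smul_mul_assoc]
    rw [← mul_assoc,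
      show star (z : A) * (z : A) = 1 from Unitary.star_mul_self_of_mem z.prop, one_mul]
  -- key zpow commutation
  have key : ∀ (k : ℤ) (i j : Fin n), ((z ^ k : unitary A) : A) * u i j =
      ζ ^ (k * (d i - d j)) • (u i j * ((z ^ k : unitary A) : A)) := by
    intro k i j
    induction k using Int.induction_on with
    | zero => simp
    | succ m ih =>
      have hzp : ((z ^ ((m : ℤ) + 1) : unitary A) : A) =
          ((z ^ (m : ℤ) : unitary A) : A) * (z : A) := by
        rw [zpow_add_one]; rfl
      rw [hzp, mul_assoc, hzu i j, mul_smul_comm, ← mul_assoc, ih, smul_mul_assoc,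
        smul_smul, ← zpow_add₀ hζ0, mul_assoc,
        show (d i - d j) + (m : ℤ) * (d i - d j) = ((m : ℤ) + 1) * (d i - d j) by ring]
    | pred m ih =>
      have hzp : ((z ^ (-(m : ℤ) - 1) : unitary A) : A) =
          ((z ^ (-(m : ℤ)) : unitary A) : A) * ((z⁻¹ : unitary A) : A) := by
        rw [zpow_sub_one]; rfl
      rw [hzp, mul_assoc, hzu' i j, mul_smul_comm, ← mul_assoc, ih, smul_mul_assoc,
        smul_smul, ← zpow_add₀ hζ0, mul_assoc,
        show -(d i - d j) + (-(m : ℤ)) * (d i - d j) = (-(m : ℤ) - 1) * (d i - d j) by ring]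
  -- part (a)
  have parta : ∀ i j, star (u i j) * ((z ^ (-d i) : unitary A) : A) =
      ζ ^ (d i * (d j - d i)) • (((z ^ (-d i) : unitary A) : A) * star (u i j)) := by
    intro i j
    have hk := congrArg star (key (d i) i j)
    rw [star_mul, star_smul, star_mul, hstar] at hk
    rw [hk]
    congr 1
    rw [Complex.star_def, map_zpow₀, hconj, inv_zpow, ← zpow_neg]
    congr 1
    ring
  refine ⟨parta, ?_, ?_⟩
  · -- part (b)
    ext i j
    rw [htbar, ht, star_mul, hstar, Matrix.diagonal_mul]
    rw [parta i j]
    simp only [zetaConj, Matrix.of_apply, mul_smul_comm]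
  · -- part (c)
    intro h
    have hmul1 : ∀ k : ℤ, ((z ^ (-k) : unitary A) : A) * ((z ^ k : unitary A) : A) = 1 := by
      intro k; rw [← hstar]; exact Unitary.star_mul_self_of_mem (z ^ k).prop
    have hmul2 : ∀ k : ℤ, ((z ^ k : unitary A) : A) * ((z ^ (-k) : unitary A) : A) = 1 := by
      intro k; rw [← hstar]; exact Unitary.mul_star_self_of_mem (z ^ k).prop
    have hdiag : IsUnit (Matrix.diagonal fun i => ((z ^ (-d i) : unitary A) : A)) := by
      refine isUnit_iff_exists.mpr
        ⟨Matrix.diagonal fun i => ((z ^ (d i) : unitary A) : A), ?_, ?_⟩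
      · rw [Matrix.diagonal_mul_diagonal]
        simp only [hmul1]
        exact Matrix.diagonal_one
      · rw [Matrix.diagonal_mul_diagonal]
        simp only [hmul2]
        exact Matrix.diagonal_one
    have hb : tbar = (Matrix.diagonal fun i => ((z ^ (-d i) : unitary A) : A)) *
        zetaConj ζ d u := by
      ext i j
      rw [htbar, ht, star_mul, hstar, Matrix.diagonal_mul, parta i j]
      simp only [zetaConj, Matrix.of_apply, mul_smul_comm]
    rw [hb]
    exact hdiag.mul h
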